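/- Fix β > 0 and α ∈ [0,1). For every x ∈ ℝ there exists a unique θ = F(x) ∈ ℝ satisfying θ = α + (1 − α)·Φ(√β·(x − θ)). The resulting function F : ℝ → ℝ is differentiable, and for every x, F′(x) = √β·(1 − α)·φ(√β·(x − F(x))) / (1 + √β·(1 − α)·φ(√β·(x − F(x)))); in particular 0 < F′(x) < 1 for all x. -/

import Mathlib

open Real Set MeasureTheory

/-- The standard normal density `φ(t) = exp(−t²/2)/√(2π)`. -/
noncomputable def stdNormalPDF (t : ℝ) : ℝ :=
  Real.exp (-(t ^ 2) / 2) / Real.sqrt (2 * Real.pi)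

/-- The standard normal cumulative distribution function `Φ`. -/
noncomputable def stdNormalCDF (x : ℝ) : ℝ :=
  ∫ t in Set.Iic x, stdNormalPDF t

lemma stdNormalPDF_pos (t : ℝ) : 0 < stdNormalPDF t :=
  div_pos (Real.exp_pos _) (Real.sqrt_pos.2 (by positivity))

lemma stdNormalPDF_eq : stdNormalPDF = fun t =>
    Real.exp (-(1/2 : ℝ) * t ^ 2) * (Real.sqrt (2 * Real.pi))⁻¹ := by
  funext t
  simp only [stdNormalPDF, div_eq_mul_inv]
  ring_nf

lemma stdNormalPDF_integrable : Integrable stdNormalPDF := by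
  rw [stdNormalPDF_eq]
  exact (integrable_exp_neg_mul_sq (by norm_num)).mul_const _

lemma stdNormalPDF_continuous : Continuous stdNormalPDF := by
  unfold stdNormalPDF
  fun_prop

lemma integral_stdNormalPDF : ∫ t, stdNormalPDF t = 1 := by
  rw [stdNormalPDF_eq]
  rw [MeasureTheory.integral_mul_const, integral_gaussian]
  have h2 : Real.pi / (1/2 : ℝ) = 2 * Real.pi := by ring
  rw [h2, mul_inv_cancel₀ (by positivity)]

lemma stdNormalCDF_nonneg (x : ℝ) : 0 ≤ stdNormalCDF x :=
  MeasureTheory.integral_nonneg fun t => (stdNormalPDF_pos t).le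

lemma stdNormalCDF_le_one (x : ℝ) : stdNormalCDF x ≤ 1 := by
  rw [← integral_stdNormalPDF]
  exact MeasureTheory.setIntegral_le_integral stdNormalPDF_integrable
    (Filter.Eventually.of_forall fun t => (stdNormalPDF_pos t).le)

lemma stdNormalCDF_hasDerivAt (x : ℝ) :
    HasDerivAt stdNormalCDF (stdNormalPDF x) x := by
  have hint : ∀ a : ℝ, IntegrableOn stdNormalPDF (Set.Iic a) :=
    fun a => stdNormalPDF_integrable.integrableOn
  have key : stdNormalCDF = fun u =>
      stdNormalCDF 0 + ∫ t in (0:ℝ)..u, stdNormalPDF t := by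
    funext u
    rw [← intervalIntegral.integral_Iic_sub_Iic (hint 0) (hint u)]
    simp [stdNormalCDF]
  rw [key]
  have hd : HasDerivAt (fun u => ∫ t in (0:ℝ)..u, stdNormalPDF t)
      (stdNormalPDF x) x :=
    intervalIntegral.integral_hasDerivAt_right
      (stdNormalPDF_integrable.intervalIntegrable)
      (stdNormalPDF_continuous.stronglyMeasurableAtFilter _ _)
      (stdNormalPDF_continuous.continuousAt)
  simpa using hd.const_add (stdNormalCDF 0)

/-- For `β > 0`, `α ∈ [0,1)`: for every `x` there is a unique `θ = F(x)`
with `θ = α + (1 − α)Φ(√β(x − θ))`; the resulting function `F` is differentiable with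
`F′(x) = √β(1−α)φ(√β(x − F x)) / (1 + √β(1−α)φ(√β(x − F x))) ∈ (0,1)`. -/
theorem implicit_regime_threshold
    (β α : ℝ) (hβ : 0 < β) (hα : α ∈ Set.Ico (0 : ℝ) 1) :
    (∀ x : ℝ, ∃! θ : ℝ, θ = α + (1 - α) * stdNormalCDF (Real.sqrt β * (x - θ))) ∧
    (∀ F : ℝ → ℝ,
      (∀ x : ℝ, F x = α + (1 - α) * stdNormalCDF (Real.sqrt β * (x - F x))) →
      ∀ x : ℝ,
        HasDerivAt F
          (Real.sqrt β * (1 - α) * stdNormalPDF (Real.sqrt β * (x - F x)) /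
            (1 + Real.sqrt β * (1 - α) * stdNormalPDF (Real.sqrt β * (x - F x)))) x ∧
        0 < Real.sqrt β * (1 - α) * stdNormalPDF (Real.sqrt β * (x - F x)) /
            (1 + Real.sqrt β * (1 - α) * stdNormalPDF (Real.sqrt β * (x - F x))) ∧
        Real.sqrt β * (1 - α) * stdNormalPDF (Real.sqrt β * (x - F x)) /
            (1 + Real.sqrt β * (1 - α) * stdNormalPDF (Real.sqrt β * (x - F x))) < 1) := by
  obtain ⟨hα0, hα1⟩ := hα
  set s : ℝ := Real.sqrt β with hs_def
  have hs : 0 < s := Real.sqrt_pos.2 hβ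
  have h1α : 0 < 1 - α := by linarith
  -- The auxiliary function K u = α + (1-α)Φ(u) + u/s
  set K : ℝ → ℝ := fun u => α + (1 - α) * stdNormalCDF u + u / s with hK_def
  have hKderiv : ∀ u : ℝ,
      HasDerivAt K ((1 - α) * stdNormalPDF u + 1 / s) u := by
    intro u
    have h1 : HasDerivAt (fun u => α + (1 - α) * stdNormalCDF u)
        ((1 - α) * stdNormalPDF u) u :=
      (((stdNormalCDF_hasDerivAt u).const_mul (1 - α)).const_add α)
    have h2 : HasDerivAt (fun u : ℝ => u / s) (1 / s) u := by
      simpa [div_eq_mul_inv] using (hasDerivAt_id u).mul_const s⁻¹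
    exact h1.add h2
  have hKdpos : ∀ u : ℝ, 0 < (1 - α) * stdNormalPDF u + 1 / s := by
    intro u
    have := stdNormalPDF_pos u
    positivity
  have hKmono : StrictMono K := by
    apply strictMono_of_deriv_pos
    intro u
    rw [(hKderiv u).deriv]
    exact hKdpos u
  have hKdiff : Differentiable ℝ K := fun u => (hKderiv u).differentiableAt
  have hKcont : Continuous K := hKdiff.continuous
  -- Surjectivity of K
  have hKsurj : Function.Surjective K := by
    intro y
    have hub : K (s * (y - α)) ≥ y := by
      have h0 : 0 ≤ (1 - α) * stdNormalCDF (s * (y - α)) :=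
        mul_nonneg h1α.le (stdNormalCDF_nonneg _)
      have hdiv : s * (y - α) / s = y - α := by field_simp
      simp only [hK_def]
      rw [hdiv]; linarith
    have hlb : K (s * (y - 1)) ≤ y := by
      have h0 : (1 - α) * stdNormalCDF (s * (y - 1)) ≤ 1 - α := by
        nlinarith [stdNormalCDF_le_one (s * (y - 1)), stdNormalCDF_nonneg (s * (y - 1))]
      have hdiv : s * (y - 1) / s = y - 1 := by field_simp
      simp only [hK_def]
      rw [hdiv]; linarith
    have hab : s * (y - 1) ≤ s * (y - α) := by nlinarith
    obtain ⟨u, _, hu⟩ := intermediate_value_Icc hab (hKcont.continuousOn)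
      (Set.mem_Icc.2 ⟨hlb, hub⟩)
    exact ⟨u, hu⟩
  -- The order isomorphism and its inverse g
  set e : ℝ ≃o ℝ := StrictMono.orderIsoOfSurjective K hKmono hKsurj with he_def
  set g : ℝ → ℝ := fun y => e.symm y with hg_def
  have hKg : ∀ y : ℝ, K (g y) = y := fun y => e.apply_symm_apply y
  have hgcont : Continuous g := e.symm.continuous
  have hgderiv : ∀ x : ℝ,
      HasDerivAt g ((1 - α) * stdNormalPDF (g x) + 1 / s)⁻¹ x := by
    intro x
    exact HasDerivAt.of_local_left_inverse (hgcont.continuousAt)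
      (hKderiv (g x)) (hKdpos (g x)).ne'
      (Filter.Eventually.of_forall hKg)
  -- Characterization of solutions
  have hchar : ∀ x θ : ℝ,
      (θ = α + (1 - α) * stdNormalCDF (s * (x - θ))) ↔ θ = x - g x / s := by
    intro x θ
    constructor
    · intro hθ
      have hK_eq : K (s * (x - θ)) = x := by
        simp only [hK_def]
        have hdiv : s * (x - θ) / s = x - θ := by field_simp
        rw [hdiv, ← hθ]; ring
      have heq : s * (x - θ) = g x := hKmono.injective (by rw [hK_eq, hKg])
      have hxθ : x - θ = g x / s := by
        field_simp; linarith [heq]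
      linarith
    · intro hθ
      have hKgx := hKg x
      simp only [hK_def] at hKgx
      have harg : s * (x - θ) = g x := by
        rw [hθ]; field_simp; ring
      rw [harg]
      have hgs : g x / s = x - θ := by rw [hθ]; ring
      rw [hgs] at hKgx
      linarith
  constructor
  · intro x
    refine ⟨x - g x / s, (hchar x _).2 rfl, fun θ hθ => (hchar x θ).1 hθ⟩
  · intro F hF x
    have hFeq : ∀ y : ℝ, F y = y - g y / s := fun y => (hchar y (F y)).1 (hF y)
    have harg : s * (x - F x) = g x := by
      rw [hFeq x]; field_simp; ring
    set p : ℝ := (1 - α) * stdNormalPDF (g x) with hp_def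
    have hp : 0 < p := mul_pos h1α (stdNormalPDF_pos _)
    have hden : 0 < 1 + s * p := by positivity
    have htarget : s * (1 - α) * stdNormalPDF (s * (x - F x)) /
        (1 + s * (1 - α) * stdNormalPDF (s * (x - F x))) = s * p / (1 + s * p) := by
      rw [harg, hp_def]; ring_nf
    rw [htarget]
    refine ⟨?_, div_pos (by positivity) hden, ?_⟩
    · have hFd : HasDerivAt F (1 - (p + 1 / s)⁻¹ / s) x := by
        have hd : HasDerivAt (fun y => y - g y / s) (1 - (p + 1 / s)⁻¹ / s) x := by
          simpa [div_eq_mul_inv, hp_def] using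
            (hasDerivAt_id' x).fun_sub (((hgderiv x)).mul_const s⁻¹)
        exact hd.congr_of_eventuallyEq (Filter.Eventually.of_forall hFeq)
      have hval : 1 - (p + 1 / s)⁻¹ / s = s * p / (1 + s * p) := by
        have h1 : p + 1 / s ≠ 0 := by positivity
        field_simp
        ring
      rwa [hval] at hFd
    · rw [div_lt_one hden]; linarith
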